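/- Let P^{[a,d]} be a transformation of a simple polygon such that P^t is critical for at least one t ∈ [a,d]. Then there exists a smallest c ∈ [a,d] such that P^c is critical; that is, the set {t ∈ [a,d] : P^t is critical} has a minimum element. -/

import Mathlib

open Set

noncomputable section

/-- The Euclidean plane. -/
abbrev Plane : Type := EuclideanSpace ℝ (Fin 2)

/-- The `i`-th edge of the polygon with vertices `P 0, …, P (n-1)`:
the closed segment from `P i` to `P (i+1)` (indices mod `n`). -/
def polyEdge {n : ℕ} [NeZero n] (P : Fin n → Plane) (i : Fin n) : Set Plane :=
  segment ℝ (P i) (P (i + 1))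

/-- The boundary of the polygon: the union of its edges. -/
def polyBoundary {n : ℕ} [NeZero n] (P : Fin n → Plane) : Set Plane :=
  ⋃ i, polyEdge P i

/-- A simple polygon on `n ≥ 3` vertices: vertices are pairwise distinct and any
two distinct edges intersect only in common endpoints. -/
def IsSimplePolygon (n : ℕ) [NeZero n] (P : Fin n → Plane) : Prop :=
  3 ≤ n ∧ Function.Injective P ∧
    ∀ i j : Fin n, i ≠ j →
      polyEdge P i ∩ polyEdge P j ⊆
        (({P i, P (i + 1)} : Set Plane) ∩ ({P j, P (j + 1)} : Set Plane))

/-- The interior of the polygon: the union of the bounded connected components of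
the complement of the boundary. -/
def polyInterior {n : ℕ} [NeZero n] (P : Fin n → Plane) : Set Plane :=
  {x | x ∉ polyBoundary P ∧
    Bornology.IsBounded (connectedComponentIn (polyBoundary P)ᶜ x)}

/-- The exterior of the polygon: the unbounded connected component of
the complement of the boundary. -/
def polyExterior {n : ℕ} [NeZero n] (P : Fin n → Plane) : Set Plane :=
  {x | x ∉ polyBoundary P ∧
    ¬ Bornology.IsBounded (connectedComponentIn (polyBoundary P)ᶜ x)}

/-- Vertices `i` and `j` are internally visible: the open segment joining them is
contained in the interior of the polygon. -/
def Visible {n : ℕ} [NeZero n] (P : Fin n → Plane) (i j : Fin n) : Prop :=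
  openSegment ℝ (P i) (P j) ⊆ polyInterior P

/-- Vertex indices `i` and `j` are adjacent: `j ≡ i ± 1 (mod n)`. -/
def AdjacentIdx (n : ℕ) [NeZero n] (i j : Fin n) : Prop :=
  j = i + 1 ∨ i = j + 1

/-- A `k`-tuple of (distinct) vertices is critical if some straight segment contains
all of them and contains no point of the exterior of the polygon. -/
def CriticalTuple {n : ℕ} [NeZero n] (P : Fin n → Plane) {k : ℕ}
    (q : Fin k → Fin n) : Prop :=
  Function.Injective (fun m => P (q m)) ∧
    ∃ u v : Plane, (∀ m, P (q m) ∈ segment ℝ u v) ∧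
      segment ℝ u v ∩ polyExterior P = ∅

/-- A polygon is critical if it has a critical `k`-tuple for some `k ≥ 3`. -/
def IsCriticalPolygon {n : ℕ} [NeZero n] (P : Fin n → Plane) : Prop :=
  ∃ k : ℕ, 3 ≤ k ∧ ∃ q : Fin k → Fin n, CriticalTuple P q

/-- A polygon is convex if the closure of its interior is a convex set. -/
def IsConvexPolygon {n : ℕ} [NeZero n] (P : Fin n → Plane) : Prop :=
  Convex ℝ (closure (polyInterior P))

/-- A transformation of a polygon on the time interval `[a, d]`: each vertex moves
along a continuous orbit, and at each time the points form a simple polygon. -/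
def IsTransformation (n : ℕ) [NeZero n] (a d : ℝ) (F : ℝ → Fin n → Plane) : Prop :=
  a ≤ d ∧ (∀ i : Fin n, ContinuousOn (fun t => F t i) (Icc a d)) ∧
    ∀ t ∈ Icc a d, IsSimplePolygon n (F t)

/-- A transformation on `[a, d]` is visibility-preserving if visible pairs stay
visible as time increases. -/
def VisibilityPreserving (n : ℕ) [NeZero n] (a d : ℝ) (F : ℝ → Fin n → Plane) : Prop :=
  ∀ i j : Fin n, ∀ s t : ℝ, a ≤ s → s ≤ t → t ≤ d →
    Visible (F s) i j → Visible (F t) i j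

/-- A transformation on `[a, d]` is a single-vertex move if at most one orbit is
nonconstant. -/
def IsSingleVertexMoveOn (n : ℕ) [NeZero n] (a d : ℝ) (F : ℝ → Fin n → Plane) : Prop :=
  ∃ i : Fin n, ∀ j : Fin n, j ≠ i → ∀ t ∈ Icc a d, F t j = F a j

/-- `δ > 0` is a safe radius for `P` if every simple polygon `Q` whose vertices are
within distance `δ` of those of `P` has critical triples only at triples that are
already critical in `P`. -/
def SafeRadius {n : ℕ} [NeZero n] (P : Fin n → Plane) (δ : ℝ) : Prop :=
  0 < δ ∧ ∀ Q : Fin n → Plane, IsSimplePolygon n Q →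
    (∀ i : Fin n, dist (P i) (Q i) < δ) →
    ∀ q : Fin 3 → Fin n, CriticalTuple Q q → CriticalTuple P q

lemma isCompact_polyBoundary {n : ℕ} [NeZero n] (P : Fin n → Plane) :
    IsCompact (polyBoundary P) := by
  apply isCompact_iUnion
  intro i
  rw [polyEdge, segment_eq_image]
  exact isCompact_Icc.image (by fun_prop)

lemma polyBoundary_nonempty {n : ℕ} [NeZero n] (P : Fin n → Plane) :
    (polyBoundary P).Nonempty :=
  ⟨P 0, Set.mem_iUnion.2 ⟨0, left_mem_segment ℝ _ _⟩⟩

lemma polyBoundary_approx {n : ℕ} [NeZero n] {P Q : Fin n → Plane} {δ : ℝ}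
    (h : ∀ i, dist (P i) (Q i) ≤ δ) :
    ∀ z ∈ polyBoundary Q, ∃ w ∈ polyBoundary P, dist z w ≤ δ := by
  intro z hz
  rcases Set.mem_iUnion.1 hz with ⟨i, hz⟩
  rcases hz with ⟨p, q, hp, hq, hpq, rfl⟩
  refine ⟨p • P i + q • P (i + 1), Set.mem_iUnion.2 ⟨i, ⟨p, q, hp, hq, hpq, rfl⟩⟩, ?_⟩
  calc dist (p • Q i + q • Q (i+1)) (p • P i + q • P (i+1))
      ≤ dist (p • Q i) (p • P i) + dist (q • Q (i+1)) (q • P (i+1)) := dist_add_add_le _ _ _ _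
    _ = ‖p‖ * dist (Q i) (P i) + ‖q‖ * dist (Q (i+1)) (P (i+1)) := by rw [dist_smul₀, dist_smul₀]
    _ ≤ p * δ + q * δ := by
        rw [Real.norm_eq_abs, Real.norm_eq_abs, abs_of_nonneg hp, abs_of_nonneg hq]
        have h1 := h i; have h2 := h (i+1)
        rw [dist_comm (Q i), dist_comm (Q (i+1))]
        have hδ : 0 ≤ δ := le_trans dist_nonneg (h i)
        exact add_le_add (by nlinarith [dist_nonneg (α := Plane) (x := Q i) (y := P i)])
          (by nlinarith [dist_nonneg (α := Plane) (x := Q (i+1)) (y := P (i+1))])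
    _ = δ := by rw [← add_mul, hpq, one_mul]

lemma polyBoundary_subset_ball {n : ℕ} [NeZero n] {P : Fin n → Plane} {M : ℝ}
    (h : ∀ i, ‖P i‖ < M) : polyBoundary P ⊆ Metric.ball (0 : Plane) M := by
  intro z hz
  rcases Set.mem_iUnion.1 hz with ⟨i, hz⟩
  have := (convex_ball (0:Plane) M).segment_subset
    (by simpa [mem_ball_zero_iff] using h i)
    (by simpa [mem_ball_zero_iff] using h (i+1))
  exact this hz

lemma isCompact_segment' (x y : Plane) : IsCompact (segment ℝ x y) := by
  rw [segment_eq_image]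
  exact isCompact_Icc.image (by fun_prop)

lemma one_lt_rank_plane : 1 < Module.rank ℝ Plane := by
  rw [← Module.finrank_eq_rank]
  norm_num [finrank_euclideanSpace]

lemma isPreconnected_norm_gt (M : ℝ) (hM : 0 ≤ M) :
    IsPreconnected {z : Plane | M < ‖z‖} := by
  set e0 : Plane := EuclideanSpace.single (0 : Fin 2) (1 : ℝ) with he0
  have hne0 : ‖e0‖ = 1 := by simp [he0, EuclideanSpace.norm_single]
  set x0 : Plane := (M + 1) • e0 with hx0
  have hnx0 : ‖x0‖ = M + 1 := by
    rw [hx0, norm_smul, hne0, Real.norm_eq_abs, abs_of_pos (by linarith)]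
    ring
  clear_value x0
  clear_value e0
  apply isPreconnected_of_forall x0
  intro y hy
  have hy' : M < ‖y‖ := hy
  set c : ℝ := ‖y‖ / (M + 1) with hc
  have hcpos : 0 < c := div_pos (by linarith) (by linarith)
  have hcx0 : ‖c • x0‖ = ‖y‖ := by
    rw [norm_smul, hnx0, Real.norm_eq_abs, abs_of_pos hcpos, hc]
    field_simp
  refine ⟨Metric.sphere (0 : Plane) ‖y‖ ∪ segment ℝ x0 (c • x0), ?_, ?_, ?_, ?_⟩
  · rintro z (hz | hz)
    · simp only [Metric.mem_sphere, dist_zero_right] at hz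
      simpa [hz] using hy'
    · rcases hz with ⟨p, q, hp, hq, hpq, rfl⟩
      have : p • x0 + q • (c • x0) = (p + q * c) • x0 := by
        rw [smul_smul, add_smul]
      rw [this, Set.mem_setOf_eq, norm_smul, hnx0, Real.norm_eq_abs]
      have hmin : min 1 c ≤ p + q * c := by
        rcases le_total 1 c with h | h
        · calc min 1 c ≤ 1 := min_le_left _ _
          _ = p + q := hpq.symm
          _ ≤ p + q * c := by nlinarith
        · calc min 1 c ≤ c := min_le_right _ _
          _ = (p + q) * c := by rw [hpq, one_mul]
          _ ≤ p + q * c := by nlinarith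
      have h1 : min 1 c * (M + 1) ≤ (p + q * c) * (M + 1) := by nlinarith [hmin]
      have h2 : M < min 1 c * (M + 1) := by
        rcases le_total 1 c with h | h
        · rw [min_eq_left h]; linarith
        · rw [min_eq_right h]
          have : c * (M + 1) = ‖y‖ := by rw [hc]; field_simp
          linarith [this ▸ hy']
      have hpos : 0 < p + q * c := by nlinarith [lt_min (by linarith : (0:ℝ) < 1) hcpos]
      rw [abs_of_pos hpos]
      nlinarith
  · exact Or.inr (left_mem_segment ℝ x0 (c • x0))
  · exact Or.inl (by simp)
  · apply IsPreconnected.union (c • x0)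
    · simp [hcx0]
    · exact right_mem_segment ℝ x0 (c • x0)
    · exact (isConnected_sphere one_lt_rank_plane 0 (norm_nonneg y)).isPreconnected
    · exact (convex_segment x0 (c • x0)).isPreconnected

lemma collinear_segment (u v : Plane) : Collinear ℝ (segment ℝ u v) := by
  rw [collinear_iff_of_mem (left_mem_segment ℝ u v)]
  refine ⟨v - u, ?_⟩
  rintro p ⟨a, b, ha, hb, hab, rfl⟩
  refine ⟨b, ?_⟩
  have ha' : a = 1 - b := by linarith
  simp only [vadd_eq_add, ha', smul_sub]
  module

lemma unbounded_norm_gt (M : ℝ) : ¬ Bornology.IsBounded {z : Plane | M < ‖z‖} := by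
  intro h
  rcases (Metric.isBounded_iff_subset_closedBall 0).1 h with ⟨r, hr⟩
  set w : Plane := (max M r + 1) • EuclideanSpace.single (0 : Fin 2) (1 : ℝ) with hw
  have hnw : ‖w‖ = |max M r + 1| := by
    rw [hw, norm_smul, EuclideanSpace.norm_single]
    simp [Real.norm_eq_abs]
  have h1 : M < ‖w‖ := by
    rw [hnw]
    calc M ≤ max M r := le_max_left _ _
      _ < max M r + 1 := by linarith
      _ ≤ |max M r + 1| := le_abs_self _
  have := hr h1
  rw [Metric.mem_closedBall, dist_zero_right, hnw] at this
  have h2 : r < |max M r + 1| := by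
    calc r ≤ max M r := le_max_right _ _
      _ < max M r + 1 := by linarith
      _ ≤ |max M r + 1| := le_abs_self _
  linarith

lemma exists_critical_triple {n : ℕ} [NeZero n] {P : Fin n → Plane}
    (h : IsCriticalPolygon P) : ∃ q : Fin 3 → Fin n, CriticalTuple P q := by
  obtain ⟨k, hk3, q, hinj, u, v, hmem, hext⟩ := h
  exact ⟨q ∘ Fin.castLE hk3,
    ⟨hinj.comp (Fin.castLE_injective hk3), u, v, fun m => hmem _, hext⟩⟩

lemma exists_uniform_bound {n : ℕ} [NeZero n] {a d : ℝ} {F : ℝ → Fin n → Plane}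
    (hcont : ∀ i, ContinuousOn (fun t => F t i) (Icc a d)) :
    ∃ M, 0 ≤ M ∧ ∀ t ∈ Icc a d, ∀ i, ‖F t i‖ < M := by
  have h : ∀ i : Fin n, ∃ r, ∀ t ∈ Icc a d, ‖F t i‖ ≤ r := by
    intro i
    have hc : IsCompact ((fun t => F t i) '' Icc a d) :=
      isCompact_Icc.image_of_continuousOn (hcont i)
    rcases (Metric.isBounded_iff_subset_closedBall 0).1 hc.isBounded with ⟨r, hr⟩
    exact ⟨r, fun t ht => by
      simpa [dist_zero_right] using hr (Set.mem_image_of_mem _ ht)⟩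
  choose r hr using h
  have hne : (Finset.univ : Finset (Fin n)).Nonempty := Finset.univ_nonempty
  refine ⟨max 0 (Finset.univ.sup' hne r) + 1, by positivity, fun t ht i => ?_⟩
  calc ‖F t i‖ ≤ r i := hr i t ht
    _ ≤ Finset.univ.sup' hne r := Finset.le_sup' r (Finset.mem_univ i)
    _ ≤ max 0 (Finset.univ.sup' hne r) := le_max_right _ _
    _ < _ := by linarith

open Filter Topology Bornology in
lemma exterior_stable {n : ℕ} [NeZero n] {a d c : ℝ} {F : ℝ → Fin n → Plane}
    (hF : IsTransformation n a d F) (hc : c ∈ Icc a d)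
    {x : Plane} (hx : x ∈ polyExterior (F c))
    (s : ℕ → ℝ) (hs : ∀ k, s k ∈ Icc a d)
    (hlim : ∀ i, Tendsto (fun k => F (s k) i) atTop (𝓝 (F c i)))
    (xk : ℕ → Plane) (hxk : Tendsto xk atTop (𝓝 x)) :
    ∀ᶠ k in atTop, xk k ∈ polyExterior (F (s k)) := by
  obtain ⟨hxB, hxUnb⟩ := hx
  -- uniform bound on all boundaries
  obtain ⟨M, hM0, hM⟩ := exists_uniform_bound hF.2.1
  set Bc := polyBoundary (F c) with hBc
  have hBcCompact : IsCompact Bc := isCompact_polyBoundary _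
  have hBcClosed : IsClosed Bc := hBcCompact.isClosed
  have hBcNe : Bc.Nonempty := polyBoundary_nonempty _
  set comp := connectedComponentIn Bcᶜ x with hcomp
  have hxmem : x ∈ Bcᶜ := hxB
  have hopen : IsOpen comp := hBcClosed.isOpen_compl.connectedComponentIn
  have hconn : IsConnected comp := isConnected_connectedComponentIn_iff.2 hxmem
  -- far point y
  have hy : ∃ y ∈ comp, M < ‖y‖ := by
    by_contra hcon
    push_neg at hcon
    exact hxUnb ((Metric.isBounded_closedBall (x := (0:Plane)) (r := M)).subset
      (fun z hz => by simpa [dist_zero_right] using hcon z hz))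
  obtain ⟨y, hycomp, hyM⟩ := hy
  -- path from x to y inside comp
  have hpath : IsPathConnected comp := (hopen.isConnected_iff_isPathConnected).1 hconn
  obtain ⟨γ, hγ⟩ := hpath.joinedIn x (mem_connectedComponentIn hxmem) y hycomp
  set K := Set.range γ with hK
  have hKcomp : IsCompact K := isCompact_range γ.continuous
  have hKconn : IsPreconnected K := isPreconnected_range γ.continuous
  have hxK : x ∈ K := ⟨0, γ.source⟩
  have hyK : y ∈ K := ⟨1, γ.target⟩
  have hKsub : K ⊆ Bcᶜ := fun z ⟨t, ht⟩ => ht ▸ connectedComponentIn_subset _ _ (hγ t)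
  -- minimal distance from K to Bc
  obtain ⟨z0, hz0K, hz0min⟩ := hKcomp.exists_isMinOn ⟨x, hxK⟩
    (Metric.continuous_infDist_pt Bc).continuousOn
  set ε := Metric.infDist z0 Bc with hε
  have hεpos : 0 < ε := (hBcClosed.notMem_iff_infDist_pos hBcNe).1 (hKsub hz0K)
  have hKdist : ∀ p ∈ K, ∀ w ∈ Bc, ε ≤ dist p w := by
    intro p hp w hw
    exact le_trans (hz0min hp) (Metric.infDist_le_dist_of_mem hw)
  -- eventual closeness
  have hev1 : ∀ᶠ k in atTop, ∀ i, dist (F c i) (F (s k) i) ≤ ε / 4 := by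
    rw [Filter.eventually_all]
    intro i
    have := (hlim i).eventually (Metric.closedBall_mem_nhds (F c i) (by positivity :
      (0:ℝ) < ε / 4))
    filter_upwards [this] with k hk
    rw [dist_comm]
    simpa [Metric.mem_closedBall] using hk
  have hev2 : ∀ᶠ k in atTop, dist (xk k) x ≤ ε / 4 := by
    have := hxk.eventually (Metric.closedBall_mem_nhds x (by positivity : (0:ℝ) < ε / 4))
    filter_upwards [this] with k hk
    simpa [Metric.mem_closedBall] using hk
  filter_upwards [hev1, hev2] with k hk1 hk2
  -- boundary at time s k
  set Bk := polyBoundary (F (s k)) with hBk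
  have happrox : ∀ z ∈ Bk, ∃ w ∈ Bc, dist z w ≤ ε / 4 := polyBoundary_approx hk1
  have hBkball : Bk ⊆ Metric.ball (0 : Plane) M :=
    polyBoundary_subset_ball (fun i => hM (s k) (hs k) i)
  -- the connected set C
  set Eb := {z : Plane | M < ‖z‖} with hEb
  set C1 := segment ℝ (xk k) x ∪ K with hC1
  set C := C1 ∪ Eb with hC
  have hxdist : ∀ w ∈ Bc, ε ≤ dist x w := hKdist x hxK
  have hCdisj : ∀ p ∈ C, p ∉ Bk := by
    rintro p (hp | hp) hpB
    · rcases happrox p hpB with ⟨w, hw, hpw⟩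
      rcases hp with hp | hp
      · -- p in segment xk k x
        have hpx : dist p x ≤ ε / 4 := by
          have : segment ℝ (xk k) x ⊆ Metric.closedBall x (ε / 4) :=
            (convex_closedBall x (ε / 4)).segment_subset
              (by simpa [Metric.mem_closedBall] using hk2)
              (Metric.mem_closedBall_self (by positivity))
          simpa [Metric.mem_closedBall] using this hp
        have h1 : ε ≤ dist x w := hxdist w hw
        have h2 : dist x w ≤ dist x p + dist p w := dist_triangle _ _ _
        rw [dist_comm x p] at h2
        -- dist p w = dist p p = 0 contradiction: p ∈ Bk so hpw : dist p w ≤ ε/4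
        linarith
      · have h1 : ε ≤ dist p w := hKdist p hp w hw
        linarith
    · have := hBkball hpB
      rw [Metric.mem_ball, dist_zero_right] at this
      exact absurd this (not_lt.2 (le_of_lt hp))
  have hCsub : C ⊆ Bkᶜ := fun p hp => hCdisj p hp
  have hC1conn : IsPreconnected C1 := by
    apply IsPreconnected.union x
    · exact right_mem_segment ℝ _ _
    · exact hxK
    · exact (convex_segment _ _).isPreconnected
    · exact hKconn
  have hCconn : IsPreconnected C := by
    apply IsPreconnected.union y
    · exact Or.inr hyK
    · exact hyM
    · exact hC1conn
    · exact isPreconnected_norm_gt M hM0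
  have hxkC : xk k ∈ C := Or.inl (Or.inl (left_mem_segment ℝ _ _))
  have hsub : C ⊆ connectedComponentIn Bkᶜ (xk k) :=
    hCconn.subset_connectedComponentIn hxkC hCsub
  refine ⟨hCdisj _ hxkC, fun hb => unbounded_norm_gt M (hb.subset ?_)⟩
  exact fun z hz => hsub (Or.inr hz)

open Filter Topology in
lemma critical_triple_limit {n : ℕ} [NeZero n] {a d c : ℝ} {F : ℝ → Fin n → Plane}
    (hF : IsTransformation n a d F) (hc : c ∈ Icc a d)
    (s : ℕ → ℝ) (hs : ∀ k, s k ∈ Icc a d)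
    (hlim : ∀ i, Tendsto (fun k => F (s k) i) atTop (𝓝 (F c i)))
    (q : Fin 3 → Fin n) (hq : ∀ k, CriticalTuple (F (s k)) q)
    (i0 i1 i2 : Fin 3) (hall : ∀ m : Fin 3, m = i0 ∨ m = i1 ∨ m = i2)
    (hw : ∀ k, Wbtw ℝ (F (s k) (q i0)) (F (s k) (q i1)) (F (s k) (q i2))) :
    CriticalTuple (F c) q := by
  have hqinj : Function.Injective q := by
    intro m m' h
    have := (hq 0).1 (a₁ := m) (a₂ := m') (by simp [h])
    exact this
  have hinjc : Function.Injective (F c) := (hF.2.2 c hc).2.1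
  have hwc : Wbtw ℝ (F c (q i0)) (F c (q i1)) (F c (q i2)) := by
    rw [← dist_add_dist_eq_iff]
    have h1 : Tendsto (fun k => dist (F (s k) (q i0)) (F (s k) (q i1)) +
        dist (F (s k) (q i1)) (F (s k) (q i2))) atTop
        (𝓝 (dist (F c (q i0)) (F c (q i1)) + dist (F c (q i1)) (F c (q i2)))) :=
      (((hlim _).dist (hlim _)).add ((hlim _).dist (hlim _)))
    have h2 : Tendsto (fun k => dist (F (s k) (q i0)) (F (s k) (q i2))) atTop
        (𝓝 (dist (F c (q i0)) (F c (q i2)))) := (hlim _).dist (hlim _)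
    have heq : ∀ k, dist (F (s k) (q i0)) (F (s k) (q i1)) +
        dist (F (s k) (q i1)) (F (s k) (q i2)) =
        dist (F (s k) (q i0)) (F (s k) (q i2)) :=
      fun k => dist_add_dist_eq_iff.2 (hw k)
    exact tendsto_nhds_unique (Filter.Tendsto.congr heq h1) h2
  refine ⟨fun m m' h => hqinj (hinjc h), F c (q i0), F c (q i2), ?_, ?_⟩
  · intro m
    rcases hall m with rfl | rfl | rfl
    · exact left_mem_segment ℝ _ _
    · exact hwc.mem_segment
    · exact right_mem_segment ℝ _ _
  · by_contra hne
    rw [← ne_eq, ← Set.nonempty_iff_ne_empty] at hne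
    obtain ⟨x, hxseg, hxext⟩ := hne
    obtain ⟨pc, bc, hp, hb, hpb, hxeq⟩ := hxseg
    set xk : ℕ → Plane := fun k => pc • F (s k) (q i0) + bc • F (s k) (q i2) with hxkdef
    have hxktend : Tendsto xk atTop (𝓝 x) := by
      rw [← hxeq]
      exact ((hlim (q i0)).const_smul pc).add ((hlim (q i2)).const_smul bc)
    have hev := exterior_stable hF hc hxext s hs hlim xk hxktend
    obtain ⟨k, hk⟩ := hev.exists
    obtain ⟨-, u, v, hmem, hext⟩ := hq k
    have hxkseg : xk k ∈ segment ℝ u v :=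
      (convex_segment u v) (hmem i0) (hmem i2) hp hb hpb
    exact Set.eq_empty_iff_forall_notMem.1 hext (xk k) ⟨hxkseg, hk⟩

open Filter Topology in
theorem statement8' {n : ℕ} [NeZero n] (a d : ℝ) (F : ℝ → Fin n → Plane)
    (hF : IsTransformation n a d F)
    (hcrit : ∃ t ∈ Icc a d, IsCriticalPolygon (F t)) :
    ∃ c, IsLeast {t ∈ Icc a d | IsCriticalPolygon (F t)} c := by
  classical
  obtain ⟨t0, ht0, hcrit0⟩ := hcrit
  set S := {t ∈ Icc a d | IsCriticalPolygon (F t)} with hS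
  have hSne : S.Nonempty := ⟨t0, ht0, hcrit0⟩
  have hSbdd : BddBelow S := ⟨a, fun t ht => ht.1.1⟩
  set c := sInf S with hc
  have hcIcc : c ∈ Icc a d :=
    ⟨le_csInf hSne (fun t ht => ht.1.1), le_trans (csInf_le hSbdd ⟨ht0, hcrit0⟩) ht0.2⟩
  obtain ⟨u, -, hulim, humem⟩ := exists_seq_tendsto_sInf hSne hSbdd
  -- triples
  have hQ : ∀ k, ∃ q : Fin 3 → Fin n, CriticalTuple (F (u k)) q :=
    fun k => exists_critical_triple (humem k).2
  choose Q hQ using hQ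
  -- collinearity orderings
  have horder : ∀ k, Wbtw ℝ (F (u k) (Q k 0)) (F (u k) (Q k 1)) (F (u k) (Q k 2)) ∨
      Wbtw ℝ (F (u k) (Q k 1)) (F (u k) (Q k 2)) (F (u k) (Q k 0)) ∨
      Wbtw ℝ (F (u k) (Q k 2)) (F (u k) (Q k 0)) (F (u k) (Q k 1)) := by
    intro k
    obtain ⟨-, uu, vv, hmem, -⟩ := hQ k
    have hcol : Collinear ℝ {F (u k) (Q k 0), F (u k) (Q k 1), F (u k) (Q k 2)} := by
      apply Collinear.subset _ (collinear_segment uu vv)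
      rintro z (rfl | rfl | rfl) <;> exact hmem _
    exact hcol.wbtw_or_wbtw_or_wbtw
  set g : ℕ → (Fin 3 → Fin n) × Fin 3 := fun k =>
    (Q k, if Wbtw ℝ (F (u k) (Q k 0)) (F (u k) (Q k 1)) (F (u k) (Q k 2)) then 0
      else if Wbtw ℝ (F (u k) (Q k 1)) (F (u k) (Q k 2)) (F (u k) (Q k 0)) then 1
      else 2) with hg
  -- pigeonhole: some value occurs frequently
  obtain ⟨v, hv⟩ := Finite.exists_infinite_fiber g
  have hfreq : ∃ᶠ k in atTop, g k = v := by
    rw [Nat.frequently_atTop_iff_infinite]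
    rw [Set.infinite_coe_iff] at hv
    exact hv
  obtain ⟨φ, hφmono, hφ⟩ := Filter.extraction_of_frequently_atTop hfreq
  set sseq := u ∘ φ with hsseq
  have hsmem : ∀ k, sseq k ∈ Icc a d := fun k => (humem (φ k)).1
  have hstend : Tendsto sseq atTop (𝓝 c) := hulim.comp hφmono.tendsto_atTop
  have hlim : ∀ i, Tendsto (fun k => F (sseq k) i) atTop (𝓝 (F c i)) := by
    intro i
    have hcw : Tendsto (fun t => F t i) (𝓝[Icc a d] c) (𝓝 (F c i)) :=
      (hF.2.1 i c hcIcc)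
    exact hcw.comp (tendsto_nhdsWithin_iff.2 ⟨hstend, Filter.Eventually.of_forall hsmem⟩)
  have hQeq : ∀ k, Q (φ k) = v.1 := fun k => congrArg Prod.fst (hφ k)
  have hqcrit : ∀ k, CriticalTuple (F (sseq k)) v.1 := fun k => hQeq k ▸ hQ (φ k)
  -- case on the ordering
  have hcritc : CriticalTuple (F c) v.1 := by
    have hWcase : (∀ k, Wbtw ℝ (F (sseq k) (v.1 0)) (F (sseq k) (v.1 1)) (F (sseq k) (v.1 2))) ∨
        (∀ k, Wbtw ℝ (F (sseq k) (v.1 1)) (F (sseq k) (v.1 2)) (F (sseq k) (v.1 0))) ∨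
        (∀ k, Wbtw ℝ (F (sseq k) (v.1 2)) (F (sseq k) (v.1 0)) (F (sseq k) (v.1 1))) := by
      by_cases h0 : v.2 = 0
      · left
        intro k
        have hgk := hφ k
        have : (if Wbtw ℝ (F (u (φ k)) (Q (φ k) 0)) (F (u (φ k)) (Q (φ k) 1)) (F (u (φ k)) (Q (φ k) 2)) then (0:Fin 3)
            else if Wbtw ℝ (F (u (φ k)) (Q (φ k) 1)) (F (u (φ k)) (Q (φ k) 2)) (F (u (φ k)) (Q (φ k) 0)) then 1
            else 2) = 0 := by
          have := congrArg Prod.snd hgk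
          simpa [hg] using this.trans h0
        by_cases hW : Wbtw ℝ (F (u (φ k)) (Q (φ k) 0)) (F (u (φ k)) (Q (φ k) 1)) (F (u (φ k)) (Q (φ k) 2))
        · have := hQeq k
          simpa [hsseq, Function.comp, this] using hW
        · rw [if_neg hW] at this
          split_ifs at this <;> simp_all
      · by_cases h1 : v.2 = 1
        · right; left
          intro k
          have hgk := hφ k
          have : (if Wbtw ℝ (F (u (φ k)) (Q (φ k) 0)) (F (u (φ k)) (Q (φ k) 1)) (F (u (φ k)) (Q (φ k) 2)) then (0:Fin 3)
              else if Wbtw ℝ (F (u (φ k)) (Q (φ k) 1)) (F (u (φ k)) (Q (φ k) 2)) (F (u (φ k)) (Q (φ k) 0)) then 1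
              else 2) = 1 := by
            have := congrArg Prod.snd hgk
            simpa [hg] using this.trans h1
          by_cases hW : Wbtw ℝ (F (u (φ k)) (Q (φ k) 1)) (F (u (φ k)) (Q (φ k) 2)) (F (u (φ k)) (Q (φ k) 0))
          · have := hQeq k
            simpa [hsseq, Function.comp, this] using hW
          · split_ifs at this <;> simp_all
        · right; right
          intro k
          have hgk := hφ k
          have : (if Wbtw ℝ (F (u (φ k)) (Q (φ k) 0)) (F (u (φ k)) (Q (φ k) 1)) (F (u (φ k)) (Q (φ k) 2)) then (0:Fin 3)
              else if Wbtw ℝ (F (u (φ k)) (Q (φ k) 1)) (F (u (φ k)) (Q (φ k) 2)) (F (u (φ k)) (Q (φ k) 0)) then 1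
              else 2) = v.2 := by
            have := congrArg Prod.snd hgk
            simpa [hg] using this
          have hW : Wbtw ℝ (F (u (φ k)) (Q (φ k) 2)) (F (u (φ k)) (Q (φ k) 0)) (F (u (φ k)) (Q (φ k) 1)) := by
            rcases horder (φ k) with hW | hW | hW
            · rw [if_pos hW] at this; exact absurd this.symm h0
            · rw [if_neg ?_, if_pos hW] at this
              · exact absurd this.symm h1
              · intro hW0
                rw [if_pos hW0] at this; exact absurd this.symm h0
            · exact hW
          have := hQeq k
          simpa [hsseq, Function.comp, this] using hW
    rcases hWcase with hW | hW | hW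
    · exact critical_triple_limit hF hcIcc sseq hsmem hlim v.1 hqcrit 0 1 2 (by decide) hW
    · exact critical_triple_limit hF hcIcc sseq hsmem hlim v.1 hqcrit 1 2 0 (by decide) hW
    · exact critical_triple_limit hF hcIcc sseq hsmem hlim v.1 hqcrit 2 0 1 (by decide) hW
  exact ⟨c, ⟨hcIcc, 3, le_refl 3, v.1, hcritc⟩, fun t ht => csInf_le hSbdd ht⟩

/-- If some polygon of a transformation is critical, then there is a
smallest time at which the polygon is critical. -/
theorem statement8 {n : ℕ} [NeZero n] (a d : ℝ) (F : ℝ → Fin n → Plane)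
    (hF : IsTransformation n a d F)
    (hcrit : ∃ t ∈ Icc a d, IsCriticalPolygon (F t)) :
    ∃ c, IsLeast {t ∈ Icc a d | IsCriticalPolygon (F t)} c := by
  exact statement8' a d F hF hcrit
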